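/- Let x₀ ∈ Ω, q ∈ (0,∞)ⁿ and μ > 0, and assume a_{jα} ≡ 0 on Ω whenever ⟨α,q⟩ > 1. Let ξ₀ ∈ ℝⁿ with |ξ₀| = 1 satisfy P_{jq}(x₀,ξ₀) = 0 for all j = 1,…,N, and let ε > 0 satisfy ε ≤ μ(1−⟨β,q⟩) for every β with ⟨β,q⟩ < 1 and a_{jβ} not identically zero for some j. Then for every δ > 0 such that the closed ball of center x₀ and radius 2δ is contained in Ω, there exists C₁ > 0 such that for all r ≥ 1, all j = 1,…,N and all x ∈ Ω with |x−x₀| < 2δ r^{−ε/μ}: |P_j(x, r^q ξ₀)| ≤ C₁ r^{1−ε/μ}. -/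

import Mathlib

open MeasureTheory Real
open scoped BigOperators ENNReal NNReal

namespace MQEpaper

/-- Points of ℝⁿ. -/
abbrev Pt (n : ℕ) := Fin n → ℝ

/-- Multi-indices. -/
abbrev MIdx (n : ℕ) := Fin n → ℕ

/-- Partial derivative in the `j`-th coordinate direction. -/
noncomputable def pd {n : ℕ} (j : Fin n) (u : Pt n → ℂ) : Pt n → ℂ :=
  fun x => fderiv ℝ u x (Pi.single j 1)

/-- Iterated partial derivative `∂^α`. -/
noncomputable def pdM {n : ℕ} (α : MIdx n) (u : Pt n → ℂ) : Pt n → ℂ :=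
  (List.finRange n).foldr (fun j v => (pd j)^[α j] v) u

/-- Length `|α| = Σ αᵢ` of a multi-index. -/
def msize {n : ℕ} (α : MIdx n) : ℕ := ∑ i, α i

/-- Pairing `⟨α,q⟩ = Σ αᵢ qᵢ` of a multi-index with a weight. -/
def dotQ {n : ℕ} (α : MIdx n) (q : Pt n) : ℝ := ∑ i, (α i : ℝ) * q i

/-- A multi-index viewed as a point of ℝⁿ. -/
def coeR {n : ℕ} (α : MIdx n) : Pt n := fun i => (α i : ℝ)

/-- The operator `D^α = (-i)^{|α|} ∂^α`. -/
noncomputable def Dop {n : ℕ} (α : MIdx n) (u : Pt n → ℂ) : Pt n → ℂ :=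
  fun x => (-Complex.I) ^ msize α * pdM α u x

/-- The differential operator `P(x,D) u = Σ_α a_α(x) D^α u` with coefficient family `a`. -/
noncomputable def Pop {n : ℕ} (a : MIdx n → Pt n → ℂ) (u : Pt n → ℂ) : Pt n → ℂ :=
  fun x => ∑ᶠ α : MIdx n, a α x * Dop α u x

/-- Iterated application `P_{i₁} ⋯ P_{i_l} u` of the operators of a system along a list. -/
noncomputable def PopList {n N : ℕ} (a : Fin N → MIdx n → Pt n → ℂ) :
    List (Fin N) → (Pt n → ℂ) → Pt n → ℂ
  | [], u => u
  | j :: L, u => Pop (a j) (PopList a L u)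

/-- The symbol `P(x,ξ) = Σ_α a_α(x) ξ^α`. -/
noncomputable def symb {n : ℕ} (a : MIdx n → Pt n → ℂ) (x ξ : Pt n) : ℂ :=
  ∑ᶠ α : MIdx n, a α x * ∏ i, (ξ i : ℂ) ^ α i

/-- The `q`-quasi-homogeneous part `P_q(x,ξ) = Σ_{⟨α,q⟩=1} a_α(x) ξ^α` of the symbol. -/
noncomputable def symbq {n : ℕ} (a : MIdx n → Pt n → ℂ) (q : Pt n) (x ξ : Pt n) : ℂ :=
  ∑ᶠ α ∈ {α : MIdx n | dotQ α q = 1}, a α x * ∏ i, (ξ i : ℂ) ^ α i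

/-- The `ξ`-derivative `P^{(α)}(x,ξ) = ∂_ξ^α P(x,ξ)` of the symbol. -/
noncomputable def symbD {n : ℕ} (a : MIdx n → Pt n → ℂ) (α : MIdx n) (x ξ : Pt n) : ℂ :=
  ∑ᶠ β ∈ {β : MIdx n | ∀ i, α i ≤ β i},
    a β x * (∏ i, ((β i).descFactorial (α i) : ℂ)) * ∏ i, (ξ i : ℂ) ^ (β i - α i)

/-- The Newton polyhedron of the system `a` at the point `x`. -/
def NPoly {n N : ℕ} (a : Fin N → MIdx n → Pt n → ℂ) (x : Pt n) : Set (Pt n) :=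
  convexHull ℝ ({0} ∪ {y | ∃ α : MIdx n, (∃ j, a j α x ≠ 0) ∧ y = coeR α})

/-- A polyhedron `F` is regular with associated finite set `Q ⊂ (0,∞)ⁿ`. -/
def IsRegular {n : ℕ} (F : Set (Pt n)) (Q : Finset (Pt n)) : Prop :=
  Q.Nonempty ∧ (∀ q ∈ Q, ∀ i, 0 < q i) ∧
    F = ⋂ q ∈ Q, {y : Pt n | (∀ i, 0 ≤ y i) ∧ ∑ i, y i * q i ≤ 1}

/-- `V(ξ) = Σ_{α ∈ S(F)} |ξ^α|`, the sum over the (integer) vertices of `F`. -/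
noncomputable def Vfun {n : ℕ} (F : Set (Pt n)) (ξ : Pt n) : ℝ :=
  ∑ᶠ α ∈ {α : MIdx n | coeR α ∈ F.extremePoints ℝ}, |∏ i, ξ i ^ α i|

/-- `k(y,F) = inf {t > 0 : y/t ∈ F}`. -/
noncomputable def kF {n : ℕ} (F : Set (Pt n)) (y : Pt n) : ℝ :=
  sInf {t : ℝ | 0 < t ∧ (fun i => y i / t) ∈ F}

/-- `μ_j = max_{q ∈ Q} q_j⁻¹`. -/
noncomputable def muj {n : ℕ} (Q : Finset (Pt n)) (j : Fin n) : ℝ :=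
  sSup ((fun q : Pt n => (q j)⁻¹) '' ↑Q)

/-- `μ = max_j μ_j`. -/
noncomputable def muQ {n : ℕ} (Q : Finset (Pt n)) : ℝ :=
  sSup (Set.range (muj Q))

/-- The weight `θ = (μ/μ₁, …, μ/μₙ)`. -/
noncomputable def theta {n : ℕ} (Q : Finset (Pt n)) : Pt n :=
  fun j => muQ Q / muj Q j

/-- The system `a` is multi-quasi-elliptic in `Ω` with Newton polyhedron `F`
(regular with associated set `Q`). -/
def IsMQE {n N : ℕ} (a : Fin N → MIdx n → Pt n → ℂ) (Ω F : Set (Pt n))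
    (Q : Finset (Pt n)) : Prop :=
  (∀ x ∈ Ω, NPoly a x = F) ∧ IsRegular F Q ∧
    ∀ x ∈ Ω, ∃ C > (0:ℝ), ∃ R ≥ (0:ℝ), ∀ ξ : Pt n, R ≤ ‖ξ‖ →
      Vfun F ξ ≤ C * ∑ j, ‖symb (a j) x ξ‖

/-- The generalized Gevrey class `G^{F,s}(Ω)` attached to a regular polyhedron `F`
(with associated set `Q`). -/
def GClassF {n : ℕ} (Ω F : Set (Pt n)) (Q : Finset (Pt n)) (s : ℝ) (u : Pt n → ℂ) : Prop :=
  ContDiffOn ℝ (⊤ : ℕ∞) u Ω ∧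
    ∀ H : Set (Pt n), H ⊆ Ω → IsCompact H → ∃ C > (0:ℝ), ∀ α : MIdx n, ∀ x ∈ H,
      ‖pdM α u x‖ ≤ C ^ (msize α + 1) * Real.Gamma (muQ Q * kF F (coeR α) + 1) ^ s

/-- The anisotropic Gevrey class `G^{w,s}(Ω)` attached to a weight `w ∈ (0,∞)ⁿ`. -/
def GClassW {n : ℕ} (Ω : Set (Pt n)) (w : Pt n) (s : ℝ) (u : Pt n → ℂ) : Prop :=
  ContDiffOn ℝ (⊤ : ℕ∞) u Ω ∧
    ∀ H : Set (Pt n), H ⊆ Ω → IsCompact H → ∃ C > (0:ℝ), ∀ β : MIdx n, ∀ x ∈ H,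
      ‖pdM β u x‖ ≤ C ^ (msize β + 1) * Real.Gamma (dotQ β w + 1) ^ s

/-- The `L²` norm of `v` on a set `ω`. -/
noncomputable def L2 {n : ℕ} (v : Pt n → ℂ) (ω : Set (Pt n)) : ℝ :=
  (eLpNorm v 2 (volume.restrict ω)).toReal

/-- The space `G^s(Ω,(P_j))` of Gevrey vectors of the system. -/
def GIter {n N : ℕ} (Ω : Set (Pt n)) (a : Fin N → MIdx n → Pt n → ℂ)
    (Q : Finset (Pt n)) (s : ℝ) (u : Pt n → ℂ) : Prop :=
  ContDiffOn ℝ (⊤ : ℕ∞) u Ω ∧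
    ∀ H : Set (Pt n), H ⊆ Ω → IsCompact H → ∃ C > (0:ℝ), ∀ L : List (Fin N),
      L2 (PopList a L u) H ≤ C ^ (L.length + 1) * (L.length.factorial : ℝ) ^ (s * muQ Q)

/-- The seminorm `|u|_{k,ω} = Σ_{k(α,F)=k} ‖∂^α u‖_{L²(ω)}` (equal to `‖u‖_{L²(ω)}`
for `k ≤ 0`). -/
noncomputable def semiN {n : ℕ} (F : Set (Pt n)) (k : ℝ) (u : Pt n → ℂ)
    (ω : Set (Pt n)) : ℝ :=
  if k ≤ 0 then L2 u ω
  else ∑ᶠ α ∈ {α : MIdx n | kF F (coeR α) = k}, L2 (pdM α u) ω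

/-- The anisotropic ball `B_ρ = {x : Σ_j |x_j|^{2μ_j/μ} < ρ²}`. -/
noncomputable def Bball {n : ℕ} (Q : Finset (Pt n)) (ρ : ℝ) : Set (Pt n) :=
  {x | ∑ j, |x j| ^ (2 * muj Q j / muQ Q) < ρ ^ 2}

/-- `σ_p(u,λ,R) = (p!)^{-sμ} λ^{-p} sup_{R/2 ≤ ρ < R} (R-ρ)^{pμ} |u|_{p,B_ρ}`. -/
noncomputable def sigmaP {n : ℕ} (F : Set (Pt n)) (Q : Finset (Pt n)) (s : ℝ)
    (u : Pt n → ℂ) (lam R : ℝ) (p : ℕ) : ℝ :=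
  (p.factorial : ℝ) ^ (-(s * muQ Q)) * lam ^ (-(p : ℝ)) *
    sSup ((fun ρ => (R - ρ) ^ ((p : ℝ) * muQ Q) * semiN F (p : ℝ) u (Bball Q ρ)) ''
      Set.Ico (R / 2) R)

/-- `v(n)`, the number of elements of `K ∩ [0,n)` where `K = {k(α,F) : α ∈ ℕⁿ}`. -/
noncomputable def vK {n : ℕ} (F : Set (Pt n)) : ℕ :=
  Set.ncard {k : ℝ | (∃ α : MIdx n, kF F (coeR α) = k) ∧ 0 ≤ k ∧ k < (n : ℝ)}

/-- The functions `A_{(i₁,…,i_k)}(x,r)` from the proof of the necessity part: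
`A_{()}(x,r) = φ(r^{εq}(x-x₀))` and
`A_{(i₁,…,i_{k+1})} = Σ_{⟨α,q⟩≤1} (1/α!) P_{i_{k+1}}^{(α)}(x,r^qξ₀) D_x^α A_{(i₁,…,i_k)}`.
The list argument is `[i_{k+1}, …, i₁]` (most recently applied operator first). -/
noncomputable def Aseq {n N : ℕ} (a : Fin N → MIdx n → Pt n → ℂ) (q ξ₀ x₀ : Pt n)
    (ε : ℝ) (φ : Pt n → ℂ) : List (Fin N) → ℝ → Pt n → ℂ
  | [], r => fun x => φ fun i => r ^ (ε * q i) * (x i - x₀ i)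
  | j :: L, r => fun x =>
      ∑ᶠ α ∈ {α : MIdx n | dotQ α q ≤ 1},
        (∏ i, ((α i).factorial : ℂ))⁻¹ *
          symbD (a j) α x (fun i => r ^ q i * ξ₀ i) *
          Dop α (Aseq a q ξ₀ x₀ ε φ L r) x


/-- inequality (3.3) of the paper: near a common zero `ξ₀` of the
`q`-quasi-homogeneous parts, the symbols satisfy `|P_j(x, r^q ξ₀)| ≤ C₁ r^{1-ε/μ}` for
`|x - x₀| < 2δ r^{-ε/μ}`. -/
theorem statement_15 {n N : ℕ} (hn : 0 < n) (hN : 0 < N)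
    (Ω : Set (Pt n)) (hΩ : IsOpen Ω)
    (a : Fin N → MIdx n → Pt n → ℂ)
    (hfin : ∀ j, {α : MIdx n | a j α ≠ 0}.Finite)
    (hcoef : ∀ j α, ContDiffOn ℝ 1 (a j α) Ω)
    (x₀ : Pt n) (hx₀ : x₀ ∈ Ω)
    (q : Pt n) (hq : ∀ i, 0 < q i) (μ : ℝ) (hμ : 0 < μ)
    (hvan : ∀ j α, 1 < dotQ α q → ∀ x ∈ Ω, a j α x = 0)
    (ξ₀ : Pt n) (hξ₀ : ‖ξ₀‖ = 1)
    (hzero : ∀ j, symbq (a j) q x₀ ξ₀ = 0)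
    (ε : ℝ) (hε : 0 < ε)
    (hεle : ∀ β : MIdx n, dotQ β q < 1 → (∃ j, ∃ x ∈ Ω, a j β x ≠ 0) →
      ε ≤ μ * (1 - dotQ β q)) :
    ∀ δ : ℝ, 0 < δ → Metric.closedBall x₀ (2 * δ) ⊆ Ω →
      ∃ C₁ > (0:ℝ), ∀ r : ℝ, 1 ≤ r → ∀ j, ∀ x ∈ Ω, dist x x₀ < 2 * δ * r ^ (-ε / μ) →
        ‖symb (a j) x (fun i => r ^ q i * ξ₀ i)‖ ≤ C₁ * r ^ (1 - ε / μ) := by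
  classical
  intro δ hδ hKΩ
  set K := Metric.closedBall x₀ (2 * δ) with hKdef
  have hKcpt : IsCompact K := isCompact_closedBall _ _
  have hKconv : Convex ℝ K := convex_closedBall _ _
  have hx₀K : x₀ ∈ K := Metric.mem_closedBall_self (by positivity)
  set S : Fin N → Finset (MIdx n) := fun j => (hfin j).toFinset with hSdef
  have hSmem : ∀ j (α : MIdx n), α ∈ S j ↔ a j α ≠ 0 := fun j α => (hfin j).mem_toFinset
  set W : MIdx n → ℝ := fun α => ∏ i, ξ₀ i ^ α i with hWdef
  -- symb as a finite sum
  have hsymb : ∀ j x (ξ : Pt n),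
      symb (a j) x ξ = ∑ α ∈ S j, a j α x * ∏ i, (ξ i : ℂ) ^ α i := by
    intro j x ξ
    refine finsum_eq_sum_of_support_subset _ ?_
    intro α hα
    simp only [Function.mem_support] at hα
    rw [Finset.mem_coe, hSmem]
    intro h0
    apply hα
    rw [h0]
    simp
  -- symbq as a finite sum
  have hsymbq : ∀ j x, symbq (a j) q x ξ₀ =
      ∑ α ∈ (S j).filter (fun α => dotQ α q = 1), a j α x * ∏ i, (ξ₀ i : ℂ) ^ α i := by
    intro j x
    refine finsum_mem_eq_sum_of_inter_support_eq _ ?_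
    ext α
    simp only [Set.mem_inter_iff, Function.mem_support, Set.mem_setOf_eq, Finset.coe_filter,
      hSmem]
    constructor
    · rintro ⟨h1, h2⟩
      refine ⟨⟨?_, h1⟩, h2⟩
      intro h0
      apply h2
      rw [h0]
      simp
    · rintro ⟨⟨_, h1⟩, h2⟩
      exact ⟨h1, h2⟩
  -- norm of each product of powers
  have hnormprod : ∀ α : MIdx n, ‖∏ i, (ξ₀ i : ℂ) ^ α i‖ = |W α| := by
    intro α
    rw [show (∏ i, ((ξ₀ i : ℂ)) ^ α i) = ((∏ i, ξ₀ i ^ α i : ℝ) : ℂ) by push_cast; rfl,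
      Complex.norm_real, Real.norm_eq_abs, hWdef]
  -- the product at the scaled point
  have hprod : ∀ r : ℝ, 0 < r → ∀ α : MIdx n,
      (∏ i, ((r ^ q i * ξ₀ i : ℝ) : ℂ) ^ α i) = ((r ^ dotQ α q * W α : ℝ) : ℂ) := by
    intro r hr α
    have hre : (∏ i, (r ^ q i * ξ₀ i) ^ α i) = r ^ dotQ α q * W α := by
      have h1 : ∀ i : Fin n, (r ^ q i * ξ₀ i) ^ α i
          = r ^ ((α i : ℝ) * q i) * ξ₀ i ^ α i := by
        intro i
        rw [mul_pow, ← Real.rpow_natCast (r ^ q i) (α i), ← Real.rpow_mul hr.le]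
        ring_nf
      rw [Finset.prod_congr rfl fun i _ => h1 i, Finset.prod_mul_distrib, hWdef, dotQ,
        Real.rpow_sum_of_pos hr]
    push_cast [← hre]
    rfl
  -- a uniform bound for the coefficient sums on K
  obtain ⟨M, hM0, hM⟩ : ∃ M : ℝ, 0 ≤ M ∧ ∀ j : Fin N, ∀ x ∈ K,
      (∑ α ∈ S j, ‖a j α x‖ * |W α|) ≤ M := by
    have hgc : ContinuousOn (fun x => ∑ j : Fin N, ∑ α ∈ S j, ‖a j α x‖ * |W α|) K := by
      refine continuousOn_finset_sum _ fun j _ => continuousOn_finset_sum _ fun α _ => ?_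
      exact (((hcoef j α).continuousOn.mono hKΩ).norm).mul continuousOn_const
    obtain ⟨z, hzK, hz⟩ := hKcpt.exists_isMaxOn ⟨x₀, hx₀K⟩ hgc
    refine ⟨∑ j : Fin N, ∑ α ∈ S j, ‖a j α z‖ * |W α|, ?_, fun j x hx => ?_⟩
    · exact Finset.sum_nonneg fun j _ => Finset.sum_nonneg fun α _ => by positivity
    · refine le_trans ?_ (hz hx)
      exact Finset.single_le_sum (f := fun j => ∑ α ∈ S j, ‖a j α x‖ * |W α|)
        (fun j _ => Finset.sum_nonneg fun α _ => by positivity) (Finset.mem_univ j)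
  -- Lipschitz constants for the coefficients on K
  have hLipEx : ∀ (j : Fin N) (α : MIdx n), ∃ L : ℝ≥0, LipschitzOnWith L (a j α) K := by
    intro j α
    have hdiff : ∀ x ∈ K, DifferentiableAt ℝ (a j α) x := by
      intro x hx
      exact ((hcoef j α).differentiableOn one_ne_zero).differentiableAt (hΩ.mem_nhds (hKΩ hx))
    have hfc : ContinuousOn (fun x => fderiv ℝ (a j α) x) K :=
      ((hcoef j α).continuousOn_fderiv_of_isOpen hΩ le_rfl).mono hKΩ
    obtain ⟨C, hC⟩ := hKcpt.exists_bound_of_continuousOn hfc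
    refine ⟨Real.toNNReal C, hKconv.lipschitzOnWith_of_nnnorm_fderiv_le hdiff ?_⟩
    intro x hx
    rw [← norm_toNNReal]
    exact Real.toNNReal_mono (hC x hx)
  choose Lf hLf using hLipEx
  set Ltot : ℝ := ∑ j : Fin N, ∑ α ∈ S j, (Lf j α : ℝ) * |W α| with hLtotdef
  have hLtot0 : 0 ≤ Ltot :=
    Finset.sum_nonneg fun j _ => Finset.sum_nonneg fun α _ => by positivity
  -- Lipschitz bound for symbq
  have hsymbqb : ∀ j, ∀ x ∈ K, ‖symbq (a j) q x ξ₀‖ ≤ Ltot * dist x x₀ := by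
    intro j x hx
    have h0 : symbq (a j) q x ξ₀ = symbq (a j) q x ξ₀ - symbq (a j) q x₀ ξ₀ := by
      rw [hzero j, sub_zero]
    rw [h0, hsymbq, hsymbq, ← Finset.sum_sub_distrib]
    refine le_trans (norm_sum_le _ _) ?_
    have hterm : ∀ α ∈ (S j).filter (fun α => dotQ α q = 1),
        ‖a j α x * ∏ i, (ξ₀ i : ℂ) ^ α i - a j α x₀ * ∏ i, (ξ₀ i : ℂ) ^ α i‖
          ≤ ((Lf j α : ℝ) * |W α|) * dist x x₀ := by
      intro α _
      rw [← sub_mul, norm_mul, hnormprod]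
      have hl : ‖a j α x - a j α x₀‖ ≤ (Lf j α : ℝ) * dist x x₀ := by
        have := (hLf j α).dist_le_mul x hx x₀ hx₀K
        rwa [dist_eq_norm] at this
      calc ‖a j α x - a j α x₀‖ * |W α| ≤ ((Lf j α : ℝ) * dist x x₀) * |W α| :=
            mul_le_mul_of_nonneg_right hl (abs_nonneg _)
        _ = ((Lf j α : ℝ) * |W α|) * dist x x₀ := by ring
    refine le_trans (Finset.sum_le_sum hterm) ?_
    rw [← Finset.sum_mul]
    refine mul_le_mul_of_nonneg_right ?_ dist_nonneg
    refine le_trans (Finset.sum_le_sum_of_subset_of_nonneg (Finset.filter_subset _ _)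
      fun α _ _ => by positivity) ?_
    exact Finset.single_le_sum (f := fun j => ∑ α ∈ S j, (Lf j α : ℝ) * |W α|)
      (fun j _ => Finset.sum_nonneg fun α _ => by positivity) (Finset.mem_univ j)
  refine ⟨M + 2 * δ * Ltot + 1, by positivity, ?_⟩
  intro r hr j x hxΩ hxd
  have hr0 : 0 < r := lt_of_lt_of_le one_pos hr
  have hneg : -ε / μ ≤ 0 := by
    rw [neg_div]
    exact neg_nonpos_of_nonneg (le_of_lt (div_pos hε hμ))
  have hrpow1 : r ^ (-ε / μ) ≤ 1 := Real.rpow_le_one_of_one_le_of_nonpos hr hneg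
  have hrpow0 : (0:ℝ) < r ^ (-ε / μ) := Real.rpow_pos_of_pos hr0 _
  have hrmain0 : (0:ℝ) ≤ r ^ (1 - ε / μ) := (Real.rpow_pos_of_pos hr0 _).le
  have hxK : x ∈ K := by
    rw [hKdef, Metric.mem_closedBall]
    calc dist x x₀ ≤ 2 * δ * r ^ (-ε / μ) := hxd.le
      _ ≤ 2 * δ * 1 := by
          exact mul_le_mul_of_nonneg_left hrpow1 (by positivity)
      _ = 2 * δ := by ring
  rw [hsymb]
  have hrw : (∑ α ∈ S j, a j α x * ∏ i, ((r ^ q i * ξ₀ i : ℝ) : ℂ) ^ α i)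
      = ∑ α ∈ S j, a j α x * ((r ^ dotQ α q * W α : ℝ) : ℂ) := by
    refine Finset.sum_congr rfl fun α _ => ?_
    rw [hprod r hr0 α]
  rw [hrw, ← Finset.sum_filter_add_sum_filter_not (S j) (fun α => dotQ α q = 1)]
  -- the quasi-homogeneous part equals r * symbq
  have hpart1 : (∑ α ∈ (S j).filter (fun α => dotQ α q = 1),
      a j α x * ((r ^ dotQ α q * W α : ℝ) : ℂ)) = (r : ℂ) * symbq (a j) q x ξ₀ := by
    rw [hsymbq, Finset.mul_sum]
    refine Finset.sum_congr rfl fun α hα => ?_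
    rw [Finset.mem_filter] at hα
    rw [hα.2, Real.rpow_one]
    have : ((W α : ℝ) : ℂ) = ∏ i, (ξ₀ i : ℂ) ^ α i := by
      rw [hWdef]; push_cast; rfl
    push_cast
    rw [this]
    ring
  refine le_trans (norm_add_le _ _) ?_
  -- bound the lower-order part
  have hpart2 : ‖∑ α ∈ (S j).filter (fun α => ¬dotQ α q = 1),
      a j α x * ((r ^ dotQ α q * W α : ℝ) : ℂ)‖ ≤ M * r ^ (1 - ε / μ) := by
    refine le_trans (norm_sum_le _ _) ?_
    have hterm : ∀ α ∈ (S j).filter (fun α => ¬dotQ α q = 1),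
        ‖a j α x * ((r ^ dotQ α q * W α : ℝ) : ℂ)‖
          ≤ (‖a j α x‖ * |W α|) * r ^ (1 - ε / μ) := by
      intro α hα
      rw [Finset.mem_filter] at hα
      by_cases h0 : a j α x = 0
      · rw [h0]
        simp only [norm_zero, zero_mul]
        positivity
      · have hlt : dotQ α q < 1 := by
          rcases lt_trichotomy (dotQ α q) 1 with h | h | h
          · exact h
          · exact absurd h hα.2
          · exact absurd (hvan j α h x hxΩ) h0
        have hle : dotQ α q ≤ 1 - ε / μ := by
          have := hεle α hlt ⟨j, x, hxΩ, h0⟩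
          have h2 : ε / μ ≤ 1 - dotQ α q := (div_le_iff₀' hμ).mpr this
          linarith
        have hrle : r ^ dotQ α q ≤ r ^ (1 - ε / μ) :=
          Real.rpow_le_rpow_of_exponent_le hr hle
        rw [norm_mul, Complex.norm_real, Real.norm_eq_abs, abs_mul,
          abs_of_nonneg (Real.rpow_pos_of_pos hr0 _).le]
        calc ‖a j α x‖ * (r ^ dotQ α q * |W α|)
            ≤ ‖a j α x‖ * (r ^ (1 - ε / μ) * |W α|) := by
              refine mul_le_mul_of_nonneg_left ?_ (norm_nonneg _)
              exact mul_le_mul_of_nonneg_right hrle (abs_nonneg _)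
          _ = (‖a j α x‖ * |W α|) * r ^ (1 - ε / μ) := by ring
    refine le_trans (Finset.sum_le_sum hterm) ?_
    rw [← Finset.sum_mul]
    refine mul_le_mul_of_nonneg_right ?_ hrmain0
    refine le_trans (Finset.sum_le_sum_of_subset_of_nonneg (Finset.filter_subset _ _)
      fun α _ _ => by positivity) (hM j x hxK)
  have hpart1b : ‖(∑ α ∈ (S j).filter (fun α => dotQ α q = 1),
      a j α x * ((r ^ dotQ α q * W α : ℝ) : ℂ))‖ ≤ (2 * δ * Ltot) * r ^ (1 - ε / μ) := by
    rw [hpart1, norm_mul, Complex.norm_real, Real.norm_eq_abs, abs_of_pos hr0]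
    calc r * ‖symbq (a j) q x ξ₀‖ ≤ r * (Ltot * dist x x₀) :=
          mul_le_mul_of_nonneg_left (hsymbqb j x hxK) hr0.le
      _ ≤ r * (Ltot * (2 * δ * r ^ (-ε / μ))) := by
          refine mul_le_mul_of_nonneg_left ?_ hr0.le
          exact mul_le_mul_of_nonneg_left hxd.le hLtot0
      _ = (2 * δ * Ltot) * (r * r ^ (-ε / μ)) := by ring
      _ = (2 * δ * Ltot) * r ^ (1 - ε / μ) := by
          have h : (1 : ℝ) - ε / μ = 1 + -ε / μ := by ring
          rw [h, Real.rpow_add hr0, Real.rpow_one]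
  calc ‖∑ α ∈ (S j).filter (fun α => dotQ α q = 1),
        a j α x * ((r ^ dotQ α q * W α : ℝ) : ℂ)‖
      + ‖∑ α ∈ (S j).filter (fun α => ¬dotQ α q = 1),
        a j α x * ((r ^ dotQ α q * W α : ℝ) : ℂ)‖
      ≤ (2 * δ * Ltot) * r ^ (1 - ε / μ) + M * r ^ (1 - ε / μ) := add_le_add hpart1b hpart2
    _ ≤ (M + 2 * δ * Ltot + 1) * r ^ (1 - ε / μ) := by nlinarith [hrmain0]

end MQEpaper
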